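/- Let 𝔽_q have characteristic not equal to 3, and let g(x) = a_3 x³ + a_2 x² + a_1 x ∈ 𝔽_q[x] with a_3 ≠ 0 and exactly one of a_2, a_1 equal to 0. Then g is not a permutation polynomial of 𝔽_q, i.e., the map x ↦ g(x) is not surjective. -/

import Mathlib

open Polynomial

theorem stmt_14 (F : Type*) [Field F] [Fintype F] (hchar : ringChar F ≠ 3)
    (a3 a2 a1 : F) (h3 : a3 ≠ 0)
    (h : (a2 = 0 ∧ a1 ≠ 0) ∨ (a2 ≠ 0 ∧ a1 = 0)) :
    ¬ Function.Surjective (fun x : F => a3 * x ^ 3 + a2 * x ^ 2 + a1 * x) := by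
  have h3F : (3 : F) ≠ 0 := fun h0 =>
    hchar (CharP.ringChar_of_prime_eq_zero Nat.prime_three (by exact_mod_cast h0))
  intro hsurj
  have hinj : Function.Injective (fun x : F => a3 * x ^ 3 + a2 * x ^ 2 + a1 * x) :=
    Finite.injective_iff_surjective.mpr hsurj
  rcases h with ⟨h2z, h1nz⟩ | ⟨h2nz, h1z⟩
  · -- a2 = 0, a1 ≠ 0
    subst h2z
    have key : ∀ x y : F, a3 * (x ^ 2 + x * y + y ^ 2) + a1 = 0 → x = y := by
      intro x y hxy
      apply hinj
      show a3 * x ^ 3 + 0 * x ^ 2 + a1 * x = a3 * y ^ 3 + 0 * y ^ 2 + a1 * y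
      linear_combination (x - y) * hxy
    by_cases h2 : ringChar F = 2
    · obtain ⟨t, ht⟩ := FiniteField.isSquare_of_char_two h2 (-(a1 / a3))
      have ht2 : t ^ 2 = -(a1 / a3) := by rw [sq]; exact ht.symm
      have ht' : a3 * t ^ 2 = -a1 := by rw [ht2]; field_simp
      have h0 := key t 0 (by linear_combination ht')
      subst h0
      apply h1nz
      have h00 : a3 * 0 ^ 2 = -a1 := ht'
      linear_combination h00
    · have h2F : (2 : F) ≠ 0 := fun h0 =>
        h2 (CharP.ringChar_of_prime_eq_zero Nat.prime_two (by exact_mod_cast h0))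
      have hodd := FiniteField.odd_card_of_char_ne_two h2
      obtain ⟨u, y, huy⟩ := FiniteField.exists_root_sum_quadratic
        (f := X ^ 2 + C (4 * (a1 / a3))) (g := C 3 * X ^ 2)
        (by compute_degree!) (by compute_degree!) hodd
      simp only [eval_add, eval_pow, eval_X, eval_C, eval_mul] at huy
      -- huy : u ^ 2 + 4 * (a1 / a3) + 3 * y ^ 2 = 0
      have huy' : a3 * u ^ 2 + 4 * a1 + 3 * a3 * y ^ 2 = 0 := by
        field_simp at huy
        linear_combination huy
      have e1 : (-y + u) / 2 = y := by
        apply key _ y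
        field_simp
        linear_combination huy'
      have e2 : (-y - u) / 2 = y := by
        apply key _ y
        field_simp
        linear_combination huy'
      have hu1 : u = 3 * y := by
        field_simp at e1
        linear_combination e1
      have hu2 : u = -(3 * y) := by
        field_simp at e2
        linear_combination -e2
      have hy : y = 0 := by
        have h6 : (2 : F) * 3 ≠ 0 := mul_ne_zero h2F h3F
        have h60 : (2 : F) * 3 * y = 0 := by linear_combination hu2 - hu1
        exact (mul_eq_zero.mp h60).resolve_left h6
      subst hy
      have hu0 : u = 0 := by rw [hu1]; ring
      subst hu0
      apply h1nz
      have h4 : (2 : F) * 2 ≠ 0 := mul_ne_zero h2F h2F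
      have h40 : (2 : F) * 2 * a1 = 0 := by linear_combination huy'
      exact (mul_eq_zero.mp h40).resolve_left h4
  · -- a1 = 0, a2 ≠ 0
    subst h1z
    have heq : -a2 / a3 = 0 := by
      apply hinj
      show a3 * (-a2 / a3) ^ 3 + a2 * (-a2 / a3) ^ 2 + 0 * (-a2 / a3) =
        a3 * 0 ^ 3 + a2 * 0 ^ 2 + 0 * 0
      field_simp
      ring
    apply h2nz
    field_simp at heq
    simpa using heq
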